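/- For every p > 0 and every t > 0: ∫_0^∞ e^{-px} t^{-2} g_{1/2}(x/t²) dx = exp(-t √p), where g_{1/2}(u) = exp(-1/(4u))/(2√π u^{3/2}). -/

import Mathlib

open MeasureTheory Real Set

noncomputable def levySmirnov (x : ℝ) : ℝ :=
  Real.exp (-1 / (4 * x)) / (2 * Real.sqrt π * x ^ ((3 : ℝ) / 2))

private lemma u_deriv {q t : ℝ} (y : ℝ) (hy : y ∈ Ioi (0:ℝ)) :
    HasDerivWithinAt (fun y : ℝ => q * y - t / (2 * y)) (q + t / (2 * y ^ 2)) (Ioi 0) y := by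
  have hy0 : y ≠ 0 := ne_of_gt hy
  have h2y : 2 * y ≠ 0 := by positivity
  have h1 : HasDerivAt (fun y : ℝ => q * y - t / (2 * y)) (q + t / (2 * y ^ 2)) y := by
    have hc : HasDerivAt (fun y : ℝ => 2 * y) 2 y := by
      simpa using (hasDerivAt_id y).const_mul 2
    have hinv : HasDerivAt (fun y : ℝ => t * (2 * y)⁻¹) (t * (-2 / (2 * y) ^ 2)) y :=
      (hc.inv h2y).const_mul t
    have hq' : HasDerivAt (fun y : ℝ => q * y) q y := by
      simpa using (hasDerivAt_id y).const_mul q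
    have h := hq'.sub hinv
    have e1 : (fun y : ℝ => q * y - t * (2 * y)⁻¹) = fun y : ℝ => q * y - t / (2 * y) := by
      funext z; rw [div_eq_mul_inv]
    have e2 : q - t * (-2 / (2 * y) ^ 2) = q + t / (2 * y ^ 2) := by
      field_simp; ring
    rw [← e1, ← e2]; exact h
  exact h1.hasDerivWithinAt

private lemma u_inj {q t : ℝ} (hq : 0 < q) (ht : 0 < t) :
    InjOn (fun y : ℝ => q * y - t / (2 * y)) (Ioi 0) := by
  intro a ha b hb h
  simp only [mem_Ioi] at ha hb
  have ha0 : a ≠ 0 := ne_of_gt ha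
  have hb0 : b ≠ 0 := ne_of_gt hb
  simp only at h
  have key : (a - b) * (2 * q * a * b + t) = 0 := by
    field_simp at h
    nlinarith [h]
  have pos : 2 * q * a * b + t > 0 := by positivity
  have := mul_eq_zero.mp key
  rcases this with h1 | h2
  · linarith
  · linarith

private lemma u_surj {q t : ℝ} (hq : 0 < q) (ht : 0 < t) :
    (fun y : ℝ => q * y - t / (2 * y)) '' (Ioi 0) = univ := by
  ext s
  simp only [mem_image, mem_Ioi, mem_univ, iff_true]
  set d := Real.sqrt (s ^ 2 + 2 * q * t) with hd
  have hd2 : d ^ 2 = s ^ 2 + 2 * q * t := Real.sq_sqrt (by nlinarith)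
  have hds : -s < d := by
    nlinarith [Real.sqrt_nonneg (s ^ 2 + 2 * q * t), hd2]
  have hsd : 0 < s + d := by linarith
  refine ⟨(s + d) / (2 * q), by positivity, ?_⟩
  have h1 : (s + d) ≠ 0 := ne_of_gt hsd
  field_simp
  nlinarith [hd2]

private lemma hB {q t : ℝ} (hq : 0 < q) (ht : 0 < t) :
    IntegrableOn (fun y : ℝ => Real.exp (-(q * y - t / (2 * y)) ^ 2)) (Ioi 0) := by
  have hbound : Integrable (fun y : ℝ => Real.exp (q * t) * Real.exp (-q ^ 2 * y ^ 2)) := by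
    exact (integrable_exp_neg_mul_sq (by positivity : (0:ℝ) < q ^ 2)).const_mul _
  apply Integrable.mono' hbound.integrableOn
  · have : Measurable fun y : ℝ => Real.exp (-(q * y - t / (2 * y)) ^ 2) := by
      apply Real.measurable_exp.comp
      apply Measurable.neg
      apply Measurable.pow_const
      exact ((measurable_const.mul measurable_id).sub
        (measurable_const.div (measurable_const.mul measurable_id)))
    exact this.aestronglyMeasurable
  · rw [ae_restrict_iff' measurableSet_Ioi]
    refine ae_of_all _ fun y hy => ?_
    have hy0 : (0:ℝ) < y := hy
    rw [Real.norm_eq_abs, abs_of_pos (Real.exp_pos _), ← Real.exp_add]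
    apply Real.exp_le_exp.mpr
    have expand : (q * y - t / (2 * y)) ^ 2 = q ^ 2 * y ^ 2 - q * t + t ^ 2 / (4 * y ^ 2) := by
      field_simp; ring
    have h4 : 0 ≤ t ^ 2 / (4 * y ^ 2) := by positivity
    nlinarith

private lemma hA {q t : ℝ} (hq : 0 < q) (ht : 0 < t) :
    IntegrableOn (fun y : ℝ => (y ^ 2)⁻¹ * Real.exp (-(q * y - t / (2 * y)) ^ 2)) (Ioi 0) := by
  have hv : ∀ y ∈ Ioi (0:ℝ), HasDerivWithinAt (fun y : ℝ => t / (2 * q * y))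
      (-(t / (2 * q)) * (y ^ 2)⁻¹) (Ioi 0) y := by
    intro y hy
    have hy0 : y ≠ 0 := ne_of_gt hy
    have hc : HasDerivAt (fun y : ℝ => 2 * q * y) (2 * q) y := by
      simpa using (hasDerivAt_id y).const_mul (2 * q)
    have := (hc.inv (by positivity)).const_mul t
    have e1 : (fun y : ℝ => t * (2 * q * y)⁻¹) = fun y : ℝ => t / (2 * q * y) := by
      funext z; rw [div_eq_mul_inv]
    have e2 : t * (-(2*q) / (2 * q * y) ^ 2) = -(t / (2 * q)) * (y ^ 2)⁻¹ := by
      field_simp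
    rw [e2] at this; rw [← e1]
    exact this.hasDerivWithinAt
  have hvinj : InjOn (fun y : ℝ => t / (2 * q * y)) (Ioi 0) := by
    intro a ha b hb h
    simp only [mem_Ioi] at ha hb
    field_simp at h
    linarith
  have hvim : (fun y : ℝ => t / (2 * q * y)) '' (Ioi 0) = Ioi 0 := by
    apply Subset.antisymm
    · rintro x ⟨y, hy, rfl⟩
      simp only [mem_Ioi] at hy ⊢
      positivity
    · intro x hx
      simp only [mem_Ioi] at hx
      refine ⟨t / (2 * q * x), by simp only [mem_Ioi]; positivity, ?_⟩
      field_simp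
  have key := (integrableOn_image_iff_integrableOn_abs_deriv_smul measurableSet_Ioi hv hvinj
    (fun y : ℝ => Real.exp (-(q * y - t / (2 * y)) ^ 2))).mp (by rw [hvim]; exact hB hq ht)
  have hcongr : EqOn (fun y : ℝ => |(-(t / (2 * q)) * (y ^ 2)⁻¹)| •
      Real.exp (-(q * (t / (2 * q * y)) - t / (2 * (t / (2 * q * y)))) ^ 2))
      (fun y : ℝ => (t / (2 * q)) * ((y ^ 2)⁻¹ * Real.exp (-(q * y - t / (2 * y)) ^ 2))) (Ioi 0) := by
    intro y hy
    have hy0 : (0:ℝ) < y := hy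
    have e3 : (q * (t / (2 * q * y)) - t / (2 * (t / (2 * q * y)))) ^ 2
        = (q * y - t / (2 * y)) ^ 2 := by
      field_simp
      ring
    simp only [smul_eq_mul, e3, abs_mul, abs_neg, abs_of_pos (by positivity : (0:ℝ) < t / (2*q)),
      abs_of_pos (by positivity : (0:ℝ) < (y^2)⁻¹)]
    ring
  have key2 : IntegrableOn (fun y : ℝ => (t / (2 * q)) *
      ((y ^ 2)⁻¹ * Real.exp (-(q * y - t / (2 * y)) ^ 2))) (Ioi 0) := by
    exact (integrableOn_congr_fun hcongr measurableSet_Ioi).mp key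
  have := key2.const_mul (2 * q / t)
  apply (integrableOn_congr_fun ?_ measurableSet_Ioi).mp this
  intro y hy
  have hc : 2 * q / t * (t / (2 * q)) = 1 := by
    field_simp
  show 2 * q / t * (t / (2 * q) * ((y ^ 2)⁻¹ * Real.exp (-(q * y - t / (2 * y)) ^ 2))) = _
  rw [← mul_assoc, hc, one_mul]

-- (I): q*B + (t/2)*A = sqrt π
private lemma gauss_split {q t : ℝ} (hq : 0 < q) (ht : 0 < t) :
    q * (∫ y in Ioi (0:ℝ), Real.exp (-(q * y - t / (2 * y)) ^ 2))
      + (t / 2) * (∫ y in Ioi (0:ℝ), (y ^ 2)⁻¹ * Real.exp (-(q * y - t / (2 * y)) ^ 2))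
      = Real.sqrt π := by
  have himg := integral_image_eq_integral_abs_deriv_smul measurableSet_Ioi
    (fun y hy => u_deriv (q := q) (t := t) y hy) (u_inj hq ht) (fun s => Real.exp (-s ^ 2))
  rw [u_surj hq ht] at himg
  have hg : ∫ x in (univ : Set ℝ), Real.exp (-x ^ 2) = Real.sqrt π := by
    rw [setIntegral_univ]
    simpa using integral_gaussian 1
  rw [himg] at hg
  rw [← hg]
  rw [← integral_const_mul, ← integral_const_mul,
    ← integral_add ((hB hq ht).const_mul q) ((hA hq ht).const_mul (t / 2))]
  apply setIntegral_congr_fun measurableSet_Ioi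
  intro y hy
  have hy0 : (0:ℝ) < y := hy
  have habs : |q + t / (2 * y ^ 2)| = q + t / (2 * y ^ 2) :=
    abs_of_pos (by positivity)
  simp only [smul_eq_mul, habs]
  field_simp

-- symmetry: B = (t/(2q)) * A
private lemma sym_rel {q t : ℝ} (hq : 0 < q) (ht : 0 < t) :
    (∫ y in Ioi (0:ℝ), Real.exp (-(q * y - t / (2 * y)) ^ 2))
      = (t / (2 * q)) * (∫ y in Ioi (0:ℝ), (y ^ 2)⁻¹ * Real.exp (-(q * y - t / (2 * y)) ^ 2)) := by
  have hv : ∀ y ∈ Ioi (0:ℝ), HasDerivWithinAt (fun y : ℝ => t / (2 * q * y))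
      (-(t / (2 * q)) * (y ^ 2)⁻¹) (Ioi 0) y := by
    intro y hy
    have hy0 : y ≠ 0 := ne_of_gt hy
    have hc : HasDerivAt (fun y : ℝ => 2 * q * y) (2 * q) y := by
      simpa using (hasDerivAt_id y).const_mul (2 * q)
    have h := (hc.inv (by positivity)).const_mul t
    have e1 : (fun y : ℝ => t * (2 * q * y)⁻¹) = fun y : ℝ => t / (2 * q * y) := by
      funext z; rw [div_eq_mul_inv]
    have e2 : t * (-(2 * q) / (2 * q * y) ^ 2) = -(t / (2 * q)) * (y ^ 2)⁻¹ := by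
      field_simp
    rw [e2] at h; rw [← e1]
    exact h.hasDerivWithinAt
  have hvinj : InjOn (fun y : ℝ => t / (2 * q * y)) (Ioi 0) := by
    intro a ha b hb h
    simp only [mem_Ioi] at ha hb
    field_simp at h
    linarith
  have hvim : (fun y : ℝ => t / (2 * q * y)) '' (Ioi 0) = Ioi 0 := by
    apply Subset.antisymm
    · rintro x ⟨y, hy, rfl⟩
      simp only [mem_Ioi] at hy ⊢
      positivity
    · intro x hx
      simp only [mem_Ioi] at hx
      refine ⟨t / (2 * q * x), by simp only [mem_Ioi]; positivity, ?_⟩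
      field_simp
  have himg := integral_image_eq_integral_abs_deriv_smul measurableSet_Ioi hv hvinj
    (fun y : ℝ => Real.exp (-(q * y - t / (2 * y)) ^ 2))
  rw [hvim] at himg
  rw [himg, ← integral_const_mul]
  apply setIntegral_congr_fun measurableSet_Ioi
  intro y hy
  have hy0 : (0:ℝ) < y := hy
  have e3 : (q * (t / (2 * q * y)) - t / (2 * (t / (2 * q * y)))) ^ 2
      = (q * y - t / (2 * y)) ^ 2 := by
    field_simp
    ring
  simp only [smul_eq_mul, e3, abs_mul, abs_neg,
    abs_of_pos (by positivity : (0:ℝ) < t / (2 * q)),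
    abs_of_pos (by positivity : (0:ℝ) < (y ^ 2)⁻¹)]
  ring

private lemma A_val {q t : ℝ} (hq : 0 < q) (ht : 0 < t) :
    (∫ y in Ioi (0:ℝ), (y ^ 2)⁻¹ * Real.exp (-(q * y - t / (2 * y)) ^ 2))
      = Real.sqrt π / t := by
  have h1 := gauss_split hq ht
  rw [sym_rel hq ht] at h1
  have hq0 : q ≠ 0 := ne_of_gt hq
  have ht0 : t ≠ 0 := ne_of_gt ht
  set A := ∫ y in Ioi (0:ℝ), (y ^ 2)⁻¹ * Real.exp (-(q * y - t / (2 * y)) ^ 2) with hAdef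
  have e : q * (t / (2 * q) * A) = t / 2 * A := by
    rw [← mul_assoc]
    congr 1
    field_simp
  have h2 : t * A = Real.sqrt π := by linarith
  field_simp
  linarith

-- K-substitution: x = y^2
private lemma K_val {q t : ℝ} (hq : 0 < q) (ht : 0 < t) :
    (∫ x in Ioi (0:ℝ), Real.exp (-(q ^ 2) * x - t ^ 2 / (4 * x)) * (x ^ ((3:ℝ)/2))⁻¹)
      = 2 * Real.sqrt π / t * Real.exp (-(t * q)) := by
  have hsq : ∀ y ∈ Ioi (0:ℝ), HasDerivWithinAt (fun y : ℝ => y ^ 2) (2 * y) (Ioi 0) y := by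
    intro y hy
    simpa [mul_comm] using (hasDerivAt_pow 2 y).hasDerivWithinAt
  have hsqinj : InjOn (fun y : ℝ => y ^ 2) (Ioi 0) := by
    intro a ha b hb h
    simp only [mem_Ioi] at ha hb
    simp only at h
    nlinarith [h]
  have hsqim : (fun y : ℝ => y ^ 2) '' (Ioi 0) = Ioi 0 := by
    apply Subset.antisymm
    · rintro x ⟨y, hy, rfl⟩
      simp only [mem_Ioi] at hy ⊢
      positivity
    · intro x hx
      simp only [mem_Ioi] at hx
      exact ⟨Real.sqrt x, by simp only [mem_Ioi]; positivity, Real.sq_sqrt hx.le⟩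
  have himg := integral_image_eq_integral_abs_deriv_smul measurableSet_Ioi hsq hsqinj
    (fun x : ℝ => Real.exp (-(q ^ 2) * x - t ^ 2 / (4 * x)) * (x ^ ((3:ℝ)/2))⁻¹)
  rw [hsqim] at himg
  rw [himg]
  have hcong : ∀ y ∈ Ioi (0:ℝ),
      |2 * y| • (Real.exp (-(q ^ 2) * y ^ 2 - t ^ 2 / (4 * y ^ 2)) * ((y ^ 2 : ℝ) ^ ((3:ℝ)/2))⁻¹)
      = (2 * Real.exp (-(t * q))) * ((y ^ 2)⁻¹ * Real.exp (-(q * y - t / (2 * y)) ^ 2)) := by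
    intro y hy
    have hy0 : (0:ℝ) < y := hy
    have hrpow : ((y ^ 2 : ℝ)) ^ ((3:ℝ)/2) = y ^ 3 := by
      rw [← Real.rpow_natCast y 2, ← Real.rpow_mul hy0.le, ← Real.rpow_natCast y 3]
      norm_num
    have hexp : -(q ^ 2) * y ^ 2 - t ^ 2 / (4 * y ^ 2)
        = -(q * y - t / (2 * y)) ^ 2 + (-(t * q)) := by
      field_simp
      ring
    rw [hexp, Real.exp_add, hrpow, abs_of_pos (by positivity : (0:ℝ) < 2 * y)]
    have hy3 : (y ^ 3 : ℝ) ≠ 0 := by positivity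
    field_simp
    rw [smul_eq_mul, mul_div_assoc', mul_div_assoc', div_eq_iff hy3]
    ring
  rw [setIntegral_congr_fun measurableSet_Ioi hcong, integral_const_mul, A_val hq ht]
  field_simp


theorem laplace_rescaled_levySmirnov :
    ∀ p t : ℝ, 0 < p → 0 < t →
      (∫ x in Ioi (0 : ℝ), Real.exp (-p * x) * ((t ^ (2 : ℕ))⁻¹ * levySmirnov (x / t ^ (2 : ℕ))))
        = Real.exp (-t * Real.sqrt p) := by
  intro p t hp ht
  set q := Real.sqrt p with hqdef
  have hq : 0 < q := Real.sqrt_pos.mpr hp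
  have hq2 : q ^ 2 = p := Real.sq_sqrt hp.le
  have hpi : (0:ℝ) < Real.sqrt π := Real.sqrt_pos.mpr Real.pi_pos
  have hcong : ∀ x ∈ Ioi (0:ℝ),
      Real.exp (-p * x) * ((t ^ (2 : ℕ))⁻¹ * levySmirnov (x / t ^ (2 : ℕ)))
      = (t / (2 * Real.sqrt π)) *
        (Real.exp (-(q ^ 2) * x - t ^ 2 / (4 * x)) * (x ^ ((3:ℝ)/2))⁻¹) := by
    intro x hx
    have hx0 : (0:ℝ) < x := hx
    unfold levySmirnov
    have h1 : ((x / t ^ 2 : ℝ)) ^ ((3:ℝ)/2) = x ^ ((3:ℝ)/2) / t ^ 3 := by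
      rw [Real.div_rpow hx0.le (by positivity)]
      congr 1
      rw [← Real.rpow_natCast t 2, ← Real.rpow_mul ht.le, ← Real.rpow_natCast t 3]
      norm_num
    have harg : (-1 : ℝ) / (4 * (x / t ^ 2)) = -(t ^ 2 / (4 * x)) := by
      field_simp
    have hsplit : Real.exp (-(q ^ 2) * x - t ^ 2 / (4 * x))
        = Real.exp (-p * x) * Real.exp (-(t ^ 2 / (4 * x))) := by
      rw [← Real.exp_add, hq2]
      ring_nf
    rw [h1, harg, hsplit]
    have hX : (0:ℝ) < x ^ ((3:ℝ)/2) := Real.rpow_pos_of_pos hx0 _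
    have hE1 : (0:ℝ) < Real.exp (-p * x) := Real.exp_pos _
    field_simp
  rw [setIntegral_congr_fun measurableSet_Ioi hcong, integral_const_mul, K_val hq ht]
  have ht0 : t ≠ 0 := ne_of_gt ht
  have hpi0 : Real.sqrt π ≠ 0 := ne_of_gt hpi
  rw [show -t * Real.sqrt p = -(t * q) by rw [hqdef]; ring]
  field_simp
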